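/- For all real numbers p > q ≥ 1, the strict inequality p + q + 1 > ((p+1)/(q+1))^{(p+q)/(p-q)} holds. -/

import Mathlib

open Real Set

-- Level 3: log(2q+1) > 2q/(q+1) for q ≥ 1
lemma lemA {q : ℝ} (hq : 1 ≤ q) : 2*q/(q+1) < Real.log (2*q+1) := by
  have key : StrictMonoOn (fun x : ℝ => Real.log (2*x+1) - 2*x/(x+1)) (Ici 1) := by
    apply strictMonoOn_of_deriv_pos (convex_Ici 1)
    · apply ContinuousOn.sub
      · apply ContinuousOn.log
        · fun_prop
        · intro x hx; simp only [mem_Ici] at hx; nlinarith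
      · apply ContinuousOn.div
        · fun_prop
        · fun_prop
        · intro x hx; simp only [mem_Ici] at hx; nlinarith
    · intro x hx
      rw [interior_Ici] at hx
      have hx1 : (1:ℝ) < x := hx
      have h1 : HasDerivAt (fun x : ℝ => 2*x+1) (2*1) x :=
        ((hasDerivAt_id' x).const_mul 2).add_const 1
      have h2 : HasDerivAt (fun x : ℝ => Real.log (2*x+1)) (2*1/(2*x+1)) x :=
        h1.log (by nlinarith)
      have h3 : HasDerivAt (fun x : ℝ => 2*x/(x+1)) (2/(x+1)^2) x := by
        have h4 := (((hasDerivAt_id' x).const_mul 2).div ((hasDerivAt_id' x).add_const 1)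
          (by intro hc; nlinarith))
        have e : (2:ℝ)/(x+1)^2 = (2*1*(x+1) - 2*x*1)/(x+1)^2 := by congr 1; ring
        rw [e]; exact h4
      have h23 : HasDerivAt (fun x : ℝ => Real.log (2*x+1) - 2*x/(x+1)) _ x := h2.sub h3
      rw [h23.deriv]
      rw [sub_pos, div_lt_div_iff₀ (by nlinarith) (by nlinarith)]
      nlinarith
  have h1 : (0:ℝ) < Real.log (2*1+1) - 2*1/(1+1) := by
    have h3 : (1:ℝ) < Real.log 3 := by
      rw [Real.lt_log_iff_exp_lt (by norm_num : (0:ℝ) < 3)]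
      calc Real.exp 1 < 2.7182818286 := Real.exp_one_lt_d9
        _ < 3 := by norm_num
    norm_num
    linarith
  rcases eq_or_lt_of_le hq with h | h
  · rw [← h]; linarith [h1]
  · have h2 := key (mem_Ici.mpr le_rfl) (mem_Ici.mpr hq) h
    simp only at h2
    linarith

-- Level 2: the derivative of f is positive
lemma lemB {q : ℝ} (hq : 1 ≤ q) {p : ℝ} (hp : q < p) :
    0 < Real.log (p+q+1) - Real.log (p+1) + Real.log (q+1)
      + (p-q)/(p+q+1) - (p+q)/(p+1) := by
  have key : StrictMonoOn (fun x : ℝ => Real.log (x+q+1) - Real.log (x+1) + Real.log (q+1)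
      + (x-q)/(x+q+1) - (x+q)/(x+1)) (Ici q) := by
    apply strictMonoOn_of_deriv_pos (convex_Ici q)
    · apply ContinuousOn.sub
      apply ContinuousOn.add
      apply ContinuousOn.add
      apply ContinuousOn.sub
      · apply ContinuousOn.log
        · fun_prop
        · intro x hx; simp only [mem_Ici] at hx; nlinarith
      · apply ContinuousOn.log
        · fun_prop
        · intro x hx; simp only [mem_Ici] at hx; nlinarith
      · fun_prop
      · apply ContinuousOn.div
        · fun_prop
        · fun_prop
        · intro x hx; simp only [mem_Ici] at hx; nlinarith
      · apply ContinuousOn.div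
        · fun_prop
        · fun_prop
        · intro x hx; simp only [mem_Ici] at hx; nlinarith
    · intro x hx
      rw [interior_Ici] at hx
      have hxq : q < x := hx
      have hB : (0:ℝ) < x+q+1 := by linarith
      have hA : (0:ℝ) < x+1 := by linarith
      have d1 : HasDerivAt (fun x : ℝ => Real.log (x+q+1)) (1/(x+q+1)) x :=
        (((hasDerivAt_id' x).add_const q).add_const 1).log (by intro hc; nlinarith)
      have d2 : HasDerivAt (fun x : ℝ => Real.log (x+1)) (1/(x+1)) x :=
        ((hasDerivAt_id' x).add_const 1).log (by intro hc; nlinarith)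
      have d3 : HasDerivAt (fun x : ℝ => (x-q)/(x+q+1))
          ((1*(x+q+1) - (x-q)*1)/(x+q+1)^2) x := by
        have := ((hasDerivAt_id' x).sub_const q).div
          (((hasDerivAt_id' x).add_const q).add_const 1) (by intro hc; nlinarith)
        exact this
      have d4 : HasDerivAt (fun x : ℝ => (x+q)/(x+1))
          ((1*(x+1) - (x+q)*1)/(x+1)^2) x := by
        have := ((hasDerivAt_id' x).add_const q).div
          ((hasDerivAt_id' x).add_const 1) (by intro hc; nlinarith)
        exact this
      have hD : HasDerivAt (fun x : ℝ => Real.log (x+q+1) - Real.log (x+1) + Real.log (q+1)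
          + (x-q)/(x+q+1) - (x+q)/(x+1)) _ x := (((d1.sub d2).add_const (Real.log (q+1))).add d3).sub d4
      rw [hD.deriv]
      have heq : 1/(x+q+1) - 1/(x+1) + (1*(x+q+1) - (x-q)*1)/(x+q+1)^2
          - (1*(x+1) - (x+q)*1)/(x+1)^2
          = (2*q*(x+1)^2 + q*(q-2)*(x+1) + q^2*(q-1)) / ((x+1)^2*(x+q+1)^2) := by
        field_simp
        ring
      rw [heq]
      apply div_pos
      · nlinarith [mul_pos (show (0:ℝ) < q by linarith) hA,
          mul_pos (mul_pos (show (0:ℝ) < q by linarith) hA) hA]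
      · positivity
  have hA0 := lemA hq
  have h2 := key (mem_Ici.mpr le_rfl) (mem_Ici.mpr (le_of_lt hp)) hp
  simp only at h2
  have hqq : Real.log (q+q+1) = Real.log (2*q+1) := by ring_nf
  rw [hqq] at h2
  have hz : Real.log (2*q+1) - Real.log (q+1) + Real.log (q+1) + (q-q)/(q+q+1)
      - (q+q)/(q+1) = Real.log (2*q+1) - 2*q/(q+1) := by ring
  rw [hz] at h2
  linarith

theorem key_power_inequality (p q : ℝ) (hq : 1 ≤ q) (hpq : q < p) :
    ((p + 1) / (q + 1)) ^ ((p + q) / (p - q)) < p + q + 1 := by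
  have hq1 : (0:ℝ) < q+1 := by linarith
  have hp1 : (0:ℝ) < p+1 := by linarith
  have hd : (0:ℝ) < p - q := by linarith
  have hy : (0:ℝ) < p+q+1 := by linarith
  -- main: F p > 0 where F x = (x-q) log(x+q+1) - (x+q)(log(x+1) - log(q+1))
  have key : StrictMonoOn (fun x : ℝ =>
      (x-q)*Real.log (x+q+1) - (x+q)*(Real.log (x+1) - Real.log (q+1))) (Ici q) := by
    apply strictMonoOn_of_deriv_pos (convex_Ici q)
    · apply ContinuousOn.sub
      · apply ContinuousOn.mul
        · fun_prop
        · apply ContinuousOn.log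
          · fun_prop
          · intro x hx; simp only [mem_Ici] at hx; nlinarith
      · apply ContinuousOn.mul
        · fun_prop
        · apply ContinuousOn.sub
          · apply ContinuousOn.log
            · fun_prop
            · intro x hx; simp only [mem_Ici] at hx; nlinarith
          · fun_prop
    · intro x hx
      rw [interior_Ici] at hx
      have hxq : q < x := hx
      have d1 : HasDerivAt (fun x : ℝ => Real.log (x+q+1)) (1/(x+q+1)) x :=
        (((hasDerivAt_id' x).add_const q).add_const 1).log (by intro hc; nlinarith)
      have d2 : HasDerivAt (fun x : ℝ => Real.log (x+1)) (1/(x+1)) x :=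
        ((hasDerivAt_id' x).add_const 1).log (by intro hc; nlinarith)
      have m1 : HasDerivAt (fun x : ℝ => (x-q)*Real.log (x+q+1))
          (1*Real.log (x+q+1) + (x-q)*(1/(x+q+1))) x :=
        ((hasDerivAt_id' x).sub_const q).mul d1
      have m2 : HasDerivAt (fun x : ℝ => (x+q)*(Real.log (x+1) - Real.log (q+1)))
          (1*(Real.log (x+1) - Real.log (q+1)) + (x+q)*(1/(x+1))) x :=
        ((hasDerivAt_id' x).add_const q).mul (d2.sub_const _)
      have m12 : HasDerivAt (fun x : ℝ =>
        (x-q)*Real.log (x+q+1) - (x+q)*(Real.log (x+1) - Real.log (q+1))) _ x := m1.sub m2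
      rw [m12.deriv]
      have hB := lemB hq hxq
      have : 1*Real.log (x+q+1) + (x-q)*(1/(x+q+1))
          - (1*(Real.log (x+1) - Real.log (q+1)) + (x+q)*(1/(x+1)))
          = Real.log (x+q+1) - Real.log (x+1) + Real.log (q+1)
            + (x-q)/(x+q+1) - (x+q)/(x+1) := by ring
      rw [this]
      exact hB
  have hF := key (mem_Ici.mpr le_rfl) (mem_Ici.mpr (le_of_lt hpq)) hpq
  simp only at hF
  have hF0 : (q-q)*Real.log (q+q+1) - (q+q)*(Real.log (q+1) - Real.log (q+1)) = 0 := by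
    ring
  rw [hF0] at hF
  -- convert to log inequality
  have hx : (0:ℝ) < (p+1)/(q+1) := by positivity
  have hlog : Real.log ((p+1)/(q+1)) * ((p+q)/(p-q)) < Real.log (p+q+1) := by
    rw [Real.log_div (by linarith) (by linarith)]
    rw [mul_div_assoc', div_lt_iff₀ hd]
    nlinarith [hF]
  calc ((p + 1) / (q + 1)) ^ ((p + q) / (p - q))
      = Real.exp (Real.log ((p+1)/(q+1)) * ((p+q)/(p-q))) := by
        rw [Real.rpow_def_of_pos hx]
    _ < Real.exp (Real.log (p+q+1)) := Real.exp_lt_exp.mpr hlog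
    _ = p+q+1 := Real.exp_log hy
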